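/- arXiv:2303.17266 — 2 statements merged into one kernel-verified Lean document; each statement's English description precedes it below -/
import Mathlib

section
/- Let X₁,…,X_d be real random variables with X_i ~ F_i, and let G_i be the distribution function of |X_i|. Then E(X₁X₂⋯X_d) ≤ E(∏_{i=1}^d G_i⁻¹(U)) where U is uniform on [0,1]. -/
open MeasureTheory Set

open Filter Topology ProbabilityTheory

/-- Generalized inverse (quantile function). -/
noncomputable def quantile (ν : Measure ℝ) (u : ℝ) : ℝ :=
  sInf {x : ℝ | u ≤ (ν (Iic x)).toReal}

lemma quantile_set_eq (ν : Measure ℝ) [IsProbabilityMeasure ν] {u : ℝ} (hu : u ∈ Ioo (0:ℝ) 1) :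
    {x : ℝ | (ν (Iic x)).toReal < u} = Iio (quantile ν u) := by
  have hq : quantile ν u = sInf {x : ℝ | u ≤ cdf ν x} := by
    unfold quantile; congr 1; ext x; rw [mem_setOf_eq, mem_setOf_eq, cdf_eq_real, measureReal_def]
  set S := {x : ℝ | u ≤ cdf ν x} with hSdef
  have hne : S.Nonempty := ((tendsto_cdf_atTop ν).eventually (eventually_ge_nhds hu.2)).exists
  have hbdd : BddBelow S := by
    obtain ⟨x₀, hx₀⟩ := eventually_atBot.mp ((tendsto_cdf_atBot ν).eventually
      (eventually_lt_nhds hu.1))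
    refine ⟨x₀, fun x hx => ?_⟩
    by_contra hc
    exact absurd hx (not_le.mpr (hx₀ x (le_of_not_ge hc)))
  have hupper : ∀ ⦃x y : ℝ⦄, x ∈ S → x ≤ y → y ∈ S := fun x y hx hxy =>
    hx.trans (monotone_cdf ν hxy)
  have hIoi : Ioi (sInf S) ⊆ S := by
    intro y hy
    obtain ⟨x, hxS, hxy⟩ := (csInf_lt_iff hbdd hne).mp hy
    exact hupper hxS hxy.le
  have hmem : sInf S ∈ S := by
    have ht : Tendsto (cdf ν) (𝓝[>] (sInf S)) (𝓝 (cdf ν (sInf S))) :=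
      ((cdf ν).right_continuous (sInf S)).mono_left (nhdsWithin_mono _ Ioi_subset_Ici_self)
    exact ge_of_tendsto ht (eventually_nhdsWithin_of_forall fun y hy => hIoi hy)
  ext x
  simp only [mem_setOf_eq, mem_Iio, hq, ← measureReal_def, ← cdf_eq_real]
  constructor
  · intro h
    by_contra hc
    push_neg at hc
    exact absurd (hupper hmem hc) (not_le.mpr h)
  · intro h
    by_contra hc
    push_neg at hc
    exact absurd (csInf_le hbdd hc) (not_le.mpr h)

lemma quantile_abs_nonneg {Ω : Type*} [MeasurableSpace Ω] (μ : Measure Ω)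
    [IsProbabilityMeasure μ] {Z : Ω → ℝ} (hZ : Measurable Z) {u : ℝ} (hu : u ∈ Ioo (0:ℝ) 1) :
    0 ≤ quantile (μ.map fun ω => |Z ω|) u := by
  haveI : IsProbabilityMeasure (μ.map fun ω => |Z ω|) :=
    Measure.isProbabilityMeasure_map hZ.abs.aemeasurable
  have key : ∀ x < (0:ℝ), x < quantile (μ.map fun ω => |Z ω|) u := by
    intro x hx
    have hmem : x ∈ {x : ℝ | ((μ.map fun ω => |Z ω|) (Iic x)).toReal < u} := by
      have : (fun ω => |Z ω|) ⁻¹' Iic x = ∅ := by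
        ext ω; simp only [mem_preimage, mem_Iic, mem_empty_iff_false, iff_false, not_le]
        exact lt_of_lt_of_le hx (abs_nonneg _)
      simp only [mem_setOf_eq, Measure.map_apply hZ.abs measurableSet_Iic, this,
        measure_empty, ENNReal.toReal_zero]
      exact hu.1
    rw [quantile_set_eq _ hu] at hmem
    exact hmem
  by_contra hc
  push_neg at hc
  exact lt_irrefl _ (key _ hc)

/-- `E(X₁⋯X_d) ≤ E(∏ G_i⁻¹(U))` where `G_i` is the distribution function of `|X_i|`. -/
theorem stmt_2 {Ω : Type*} [MeasurableSpace Ω] (μ : Measure Ω) [IsProbabilityMeasure μ]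
    (d : ℕ) (X : Fin d → Ω → ℝ) (hm : ∀ i, Measurable (X i))
    (hInt : Integrable (fun ω => ∏ i, X i ω) μ)
    (hIntQ : IntegrableOn
      (fun u => ∏ i, quantile (μ.map (fun ω => |X i ω|)) u) (Icc (0:ℝ) 1) volume) :
    ∫ ω, ∏ i, X i ω ∂μ
      ≤ ∫ u in Icc (0:ℝ) 1, ∏ i, quantile (μ.map (fun ω => |X i ω|)) u := by
  classical
  set Y : Fin d → Ω → ℝ := fun i ω => |X i ω| with hYdef
  have hmY : ∀ i, Measurable (Y i) := fun i => (hm i).abs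
  set ν : Fin d → Measure ℝ := fun i => μ.map (Y i) with hνdef
  have hPν : ∀ i, IsProbabilityMeasure (ν i) := fun i =>
    Measure.isProbabilityMeasure_map (hmY i).aemeasurable
  set q : Fin d → ℝ → ℝ := fun i => quantile (ν i) with hqdef
  set π : Measure (Fin d → ℝ) := Measure.pi fun _ => volume with hπdef
  set ρ : Measure ℝ := volume.restrict (Ioo 0 1) with hρdef
  -- nonnegativity of quantiles on (0,1)
  have qnn : ∀ i, ∀ u ∈ Ioo (0:ℝ) 1, 0 ≤ q i u := fun i u hu =>
    quantile_abs_nonneg μ (hm i) hu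
  have qset : ∀ i, ∀ u ∈ Ioo (0:ℝ) 1, {x : ℝ | ((ν i) (Iic x)).toReal < u} = Iio (q i u) :=
    fun i u hu => by
      haveI := hPν i
      exact quantile_set_eq (ν i) hu
  -- the two product-space sets
  set E : Set (Ω × (Fin d → ℝ)) := {p | ∀ i, 0 < p.2 i ∧ p.2 i < Y i p.1} with hEdef
  set E' : Set (ℝ × (Fin d → ℝ)) :=
    {p | ∀ i, 0 < p.2 i ∧ ((ν i) (Iic (p.2 i))).toReal < p.1} with hE'def
  have hE : MeasurableSet E := by
    have : E = ⋂ i, ({p : Ω × (Fin d → ℝ) | 0 < p.2 i} ∩ {p | p.2 i < Y i p.1}) := by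
      ext p; simp [hEdef, forall_and]
    rw [this]
    refine MeasurableSet.iInter fun i => (MeasurableSet.inter ?_ ?_)
    · exact measurableSet_lt measurable_const (by fun_prop)
    · exact measurableSet_lt (by fun_prop) ((hmY i).comp measurable_fst)
  have hFmeas : ∀ i, Measurable fun x : ℝ => ((ν i) (Iic x)).toReal := by
    intro i
    refine Monotone.measurable fun x y hxy => ?_
    exact ENNReal.toReal_mono (measure_ne_top _ _) (measure_mono (Iic_subset_Iic.mpr hxy))
  have hE' : MeasurableSet E' := by
    have : E' = ⋂ i, ({p : ℝ × (Fin d → ℝ) | 0 < p.2 i} ∩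
        {p | ((ν i) (Iic (p.2 i))).toReal < p.1}) := by
      ext p; simp [hE'def, forall_and]
    rw [this]
    refine MeasurableSet.iInter fun i => (MeasurableSet.inter ?_ ?_)
    · exact measurableSet_lt measurable_const (by fun_prop)
    · exact measurableSet_lt ((hFmeas i).comp (by fun_prop)) measurable_fst
  -- Step: LHS lintegral equals product measure of E
  have keyLHS : ∫⁻ ω, ∏ i, ENNReal.ofReal (Y i ω) ∂μ = (μ.prod π) E := by
    rw [Measure.prod_apply hE]
    refine lintegral_congr fun ω => ?_
    have hpre : Prod.mk ω ⁻¹' E = Set.pi univ fun i => Ioo 0 (Y i ω) := by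
      ext t; simp [hEdef, Set.mem_pi]
    rw [hpre, Measure.pi_pi]
    exact Finset.prod_congr rfl fun i _ => by rw [Real.volume_Ioo, sub_zero]
  -- Step: RHS lintegral equals product measure of E'
  have keyRHS : (ρ.prod π) E' = ∫⁻ u in Ioo (0:ℝ) 1, ∏ i, ENNReal.ofReal (q i u) := by
    rw [Measure.prod_apply hE']
    refine setLIntegral_congr_fun_ae measurableSet_Ioo (ae_of_all _ fun u hu => ?_)
    have hpre : Prod.mk u ⁻¹' E' = Set.pi univ fun i => Ioo 0 (q i u) := by
      ext t
      simp only [mem_preimage, hE'def, mem_setOf_eq, Set.mem_pi, mem_univ, true_implies, mem_Ioo]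
      refine forall_congr' fun i => and_congr_right fun _ => ?_
      have hiff : t i < q i u ↔ ((ν i) (Iic (t i))).toReal < u := by
        rw [← mem_Iio, ← qset i u hu]; exact Iff.rfl
      exact hiff.symm
    rw [hpre, Measure.pi_pi]
    exact Finset.prod_congr rfl fun i _ => by rw [Real.volume_Ioo, sub_zero]
  -- Step: comparison of the two product measures
  have keyMid : (μ.prod π) E ≤ (ρ.prod π) E' := by
    rw [Measure.prod_apply_symm hE, Measure.prod_apply_symm hE']
    refine lintegral_mono fun t => ?_
    by_cases hpos : ∀ i, 0 < t i
    · have hsec : (fun ω => (ω, t)) ⁻¹' E = ⋂ i, {ω | t i < Y i ω} := by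
        ext ω
        simp only [mem_preimage, hEdef, mem_setOf_eq, mem_iInter]
        exact ⟨fun h i => (h i).2, fun h i => ⟨hpos i, h i⟩⟩
      have hsec' : (fun u => (u, t)) ⁻¹' E' = {u | ∀ i, ((ν i) (Iic (t i))).toReal < u} := by
        ext u
        simp only [mem_preimage, hE'def, mem_setOf_eq]
        exact ⟨fun h i => (h i).2, fun h i => ⟨hpos i, h i⟩⟩
      rw [hsec, hsec']
      rcases isEmpty_or_nonempty (Fin d) with hd | hd
      · simp only [iInter_of_empty]
        have : {u : ℝ | ∀ i : Fin d, ((ν i) (Iic (t i))).toReal < u} = univ := by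
          ext u; simp [IsEmpty.forall_iff]
        rw [this]
        simp only [measure_univ, Measure.restrict_apply_univ, hρdef]
        rw [Real.volume_Ioo]
        norm_num
      · obtain ⟨j, hj⟩ := Finite.exists_max fun i => ((ν i) (Iic (t i))).toReal
        have h1 : μ (⋂ i, {ω | t i < Y i ω}) ≤ 1 - (ν j) (Iic (t j)) := by
          refine le_trans (measure_mono (iInter_subset _ j)) ?_
          have hset : {ω | t j < Y j ω} = Y j ⁻¹' Ioi (t j) := rfl
          have hmap : (ν j) (Ioi (t j)) = μ (Y j ⁻¹' Ioi (t j)) :=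
            Measure.map_apply (hmY j) measurableSet_Ioi
          rw [hset, ← hmap, show Ioi (t j) = (Iic (t j))ᶜ from (compl_Iic).symm,
            measure_compl measurableSet_Iic (measure_ne_top _ _)]
          haveI := hPν j
          rw [measure_univ]
        have h2 : 1 - (ν j) (Iic (t j)) ≤ ρ {u | ∀ i, ((ν i) (Iic (t i))).toReal < u} := by
          have hsub : Ioo (((ν j) (Iic (t j))).toReal) 1 ⊆
              {u : ℝ | ∀ i, ((ν i) (Iic (t i))).toReal < u} ∩ Ioo 0 1 := by
            intro u hu
            refine ⟨fun i => lt_of_le_of_lt (hj i) hu.1, ⟨?_, hu.2⟩⟩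
            exact lt_of_le_of_lt ENNReal.toReal_nonneg hu.1
          have hρval : ρ {u | ∀ i, ((ν i) (Iic (t i))).toReal < u} =
              volume ({u : ℝ | ∀ i, ((ν i) (Iic (t i))).toReal < u} ∩ Ioo 0 1) := by
            rw [hρdef, Measure.restrict_apply']
            exact measurableSet_Ioo
          rw [hρval]
          refine le_trans ?_ (measure_mono hsub)
          rw [Real.volume_Ioo, ENNReal.ofReal_sub _ ENNReal.toReal_nonneg, ENNReal.ofReal_one,
            ENNReal.ofReal_toReal (measure_ne_top _ _)]
        exact le_trans h1 h2
    · push_neg at hpos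
      obtain ⟨i, hi⟩ := hpos
      have : (fun ω => (ω, t)) ⁻¹' E = ∅ := by
        ext ω
        simp only [mem_preimage, hEdef, mem_setOf_eq, mem_empty_iff_false, iff_false, not_forall]
        exact ⟨i, fun h => absurd h.1 (not_lt.mpr hi)⟩
      rw [this]
      simp
  have hD : ∫⁻ ω, ∏ i, ENNReal.ofReal (Y i ω) ∂μ
      ≤ ∫⁻ u in Ioo (0:ℝ) 1, ∏ i, ENNReal.ofReal (q i u) := by
    rw [keyLHS, ← keyRHS]; exact keyMid
  -- integrability of |∏ X| = ∏ Y
  have hIntY : Integrable (fun ω => ∏ i, Y i ω) μ := by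
    have := hInt.abs
    simpa only [Finset.abs_prod] using this
  have hIQ' : IntegrableOn (fun u => ∏ i, q i u) (Ioo (0:ℝ) 1) volume :=
    hIntQ.mono_set Ioo_subset_Icc_self
  -- finiteness of RHS lintegral
  have hfin : (∫⁻ u in Ioo (0:ℝ) 1, ∏ i, ENNReal.ofReal (q i u)) ≠ ⊤ := by
    have hb : ∫⁻ u in Ioo (0:ℝ) 1, ∏ i, ENNReal.ofReal (q i u)
        ≤ ∫⁻ u in Ioo (0:ℝ) 1, (‖∏ i, q i u‖₊ : ENNReal) := by
      refine lintegral_mono_ae ((ae_restrict_iff' measurableSet_Ioo).mpr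
        (ae_of_all _ fun u hu => ?_))
      rw [← ENNReal.ofReal_prod_of_nonneg fun i _ => qnn i u hu,
        ← enorm_eq_nnnorm, Real.enorm_eq_ofReal_abs]
      exact ENNReal.ofReal_le_ofReal (le_abs_self _)
    exact ne_top_of_le_ne_top hIQ'.2.ne hb
  -- identify RHS real integral
  have hC : ∫ u in Icc (0:ℝ) 1, ∏ i, q i u
      = (∫⁻ u in Ioo (0:ℝ) 1, ∏ i, ENNReal.ofReal (q i u)).toReal := by
    rw [integral_Icc_eq_integral_Ioo]
    rw [integral_eq_lintegral_of_nonneg_ae ((ae_restrict_iff' measurableSet_Ioo).mpr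
      (ae_of_all _ fun u hu => Finset.prod_nonneg fun i _ => qnn i u hu))
      hIQ'.aestronglyMeasurable]
    congr 1
    refine lintegral_congr_ae ((ae_restrict_iff' measurableSet_Ioo).mpr
      (ae_of_all _ fun u hu => ?_))
    exact ENNReal.ofReal_prod_of_nonneg fun i _ => qnn i u hu
  -- identify LHS real integral
  have hB : ∫ ω, ∏ i, Y i ω ∂μ = (∫⁻ ω, ∏ i, ENNReal.ofReal (Y i ω) ∂μ).toReal := by
    rw [integral_eq_lintegral_of_nonneg_ae
      (ae_of_all _ fun ω => Finset.prod_nonneg fun i _ => abs_nonneg _)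
      hIntY.aestronglyMeasurable]
    congr 1
    exact lintegral_congr fun ω => ENNReal.ofReal_prod_of_nonneg fun i _ => abs_nonneg _
  have hA : ∫ ω, ∏ i, X i ω ∂μ ≤ ∫ ω, ∏ i, Y i ω ∂μ := by
    refine integral_mono hInt hIntY fun ω => ?_
    calc ∏ i, X i ω ≤ |∏ i, X i ω| := le_abs_self _
      _ = ∏ i, Y i ω := Finset.abs_prod _ _
  calc ∫ ω, ∏ i, X i ω ∂μ ≤ ∫ ω, ∏ i, Y i ω ∂μ := hA
    _ = (∫⁻ ω, ∏ i, ENNReal.ofReal (Y i ω) ∂μ).toReal := hB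
    _ ≤ (∫⁻ u in Ioo (0:ℝ) 1, ∏ i, ENNReal.ofReal (q i u)).toReal :=
        ENNReal.toReal_mono hfin hD
    _ = ∫ u in Icc (0:ℝ) 1, ∏ i, q i u := hC.symm
end

section
/- If X₁,…,X_d are random variables with X_i ~ F_i such that |X₁|,…,|X_d| are comonotonic and ∏_{i=1}^d X_i ≥ 0 almost surely, then E(∏_{i=1}^d X_i) = E(∏_{i=1}^d G_i⁻¹(U)) where G_i is the distribution function of |X_i| and U ~ Uniform[0,1], and (X₁,…,X_d) attains the maximum of E(Y₁⋯Y_d) over all couplings with Y_i ~ F_i. -/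
open MeasureTheory Set

/-- A family of random variables is comonotonic if all of them are (a.s.) nondecreasing
functions of a single random variable. -/
def Comonotonic {Ω ι : Type*} [MeasurableSpace Ω] (μ : Measure Ω) (Y : ι → Ω → ℝ) : Prop :=
  ∃ (T : Ω → ℝ) (f : ι → ℝ → ℝ), (∀ i, Monotone (f i)) ∧ ∀ i, ∀ᵐ ω ∂μ, Y i ω = f i (T ω)

open Filter Topology ProbabilityTheory ENNReal

section Aux

/-- A finite nonempty family of pairwise `⊆`-comparable sets has a least element. -/
lemma aux_exists_min {α β : Type*} (s : Finset β) (hs : s.Nonempty) (A : β → Set α)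
    (h : ∀ i ∈ s, ∀ j ∈ s, A i ⊆ A j ∨ A j ⊆ A i) :
    ∃ i ∈ s, ∀ j ∈ s, A i ⊆ A j := by
  classical
  induction s using Finset.induction_on with
  | empty => simp at hs
  | @insert a s ha ih =>
    rcases s.eq_empty_or_nonempty with rfl | hne
    · exact ⟨a, by simp⟩
    · obtain ⟨i, hi, hmin⟩ := ih hne
        (fun i hi j hj => h i (Finset.mem_insert_of_mem hi) j (Finset.mem_insert_of_mem hj))
      rcases h a (Finset.mem_insert_self a s) i (Finset.mem_insert_of_mem hi) with hai | hia
      · refine ⟨a, Finset.mem_insert_self a s, fun j hj => ?_⟩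
        rcases Finset.mem_insert.1 hj with rfl | hj
        · exact subset_rfl
        · exact hai.trans (hmin j hj)
      · refine ⟨i, Finset.mem_insert_of_mem hi, fun j hj => ?_⟩
        rcases Finset.mem_insert.1 hj with rfl | hj
        · exact hia
        · exact hmin j hj

/-- Product of lintegrals as a lintegral over a product space. -/
lemma aux_lintegral_pi_prod : ∀ (d : ℕ) (g : Fin d → ℝ → ℝ≥0∞), (∀ i, Measurable (g i)) →
    ∫⁻ t : Fin d → ℝ, ∏ i, g i (t i) ∂(Measure.pi fun _ => volume) = ∏ i, ∫⁻ s, g i s := by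
  intro d
  induction d with
  | zero =>
    intro g hg
    simp [lintegral_const, Measure.pi_univ]
  | succ n ih =>
    intro g hg
    have hmp := measurePreserving_piFinSuccAbove (fun _ : Fin (n+1) => (volume : Measure ℝ)) 0
    have hG : Measurable (fun p : ℝ × (Fin n → ℝ) =>
        g 0 p.1 * ∏ j : Fin n, g j.succ (p.2 j)) := by
      refine ((hg 0).comp measurable_fst).mul ?_
      exact Finset.measurable_prod _ fun j _ =>
        (hg j.succ).comp ((measurable_pi_apply j).comp measurable_snd)
    have hcomp := hmp.lintegral_comp hG
    have hfun : ∀ t : Fin (n+1) → ℝ,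
        (fun p : ℝ × (Fin n → ℝ) => g 0 p.1 * ∏ j : Fin n, g j.succ (p.2 j))
          ((MeasurableEquiv.piFinSuccAbove (fun _ => ℝ) 0) t)
        = ∏ i, g i (t i) := by
      intro t
      have : (MeasurableEquiv.piFinSuccAbove (fun _ : Fin (n+1) => ℝ) 0) t
          = (t 0, fun j => t j.succ) := by
        simp [MeasurableEquiv.piFinSuccAbove]
        rfl
      rw [this, Fin.prod_univ_succ]
    calc ∫⁻ t : Fin (n+1) → ℝ, ∏ i, g i (t i) ∂(Measure.pi fun _ => volume)
        = ∫⁻ p : ℝ × (Fin n → ℝ), g 0 p.1 * ∏ j : Fin n, g j.succ (p.2 j)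
            ∂(volume.prod (Measure.pi fun _ => volume)) := by
          rw [← hcomp]; exact lintegral_congr fun t => (hfun t).symm
      _ = (∫⁻ s, g 0 s) * ∫⁻ y : Fin n → ℝ, ∏ j : Fin n, g j.succ (y j)
            ∂(Measure.pi fun _ => volume) := by
          exact lintegral_prod_mul (μ := volume) (ν := Measure.pi fun _ : Fin n => volume)
            (f := g 0) (g := fun y => ∏ j : Fin n, g j.succ (y j)) (hg 0).aemeasurable
            (Finset.measurable_prod _ fun j _ =>
              (hg j.succ).comp (measurable_pi_apply j)).aemeasurable
      _ = ∏ i, ∫⁻ s, g i s := by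
          rw [ih _ (fun j => hg j.succ), Fin.prod_univ_succ]

lemma aux_prod_indicator {Ω : Type*} {d : ℕ} (s : Fin d → Set Ω) (x : Ω) :
    ∏ i, (s i).indicator (1 : Ω → ℝ≥0∞) x = (⋂ i, s i).indicator 1 x := by
  by_cases hx : x ∈ ⋂ i, s i
  · rw [indicator_of_mem hx]
    rw [Finset.prod_congr rfl fun i _ => indicator_of_mem (mem_iInter.1 hx i) _]
    simp
  · rw [indicator_of_notMem hx]
    obtain ⟨i, hi⟩ : ∃ i, x ∉ s i := by
      by_contra h; push_neg at h; exact hx (mem_iInter.2 h)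
    exact Finset.prod_eq_zero (Finset.mem_univ i) (indicator_of_notMem hi _)

end Aux

section Quantile

variable (ν : Measure ℝ) [IsProbabilityMeasure ν]

lemma quantile_eq_cdf (u : ℝ) : quantile ν u = sInf {x | u ≤ cdf ν x} := by
  unfold quantile
  congr 1
  ext x
  rw [mem_setOf_eq, mem_setOf_eq, cdf_eq_real, measureReal_def]

lemma qset_nonempty {u : ℝ} (h1 : u < 1) : {x | u ≤ cdf ν x}.Nonempty := by
  obtain ⟨x, hx⟩ := ((tendsto_cdf_atTop ν).eventually_const_lt h1).exists
  exact ⟨x, hx.le⟩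

lemma qset_bddBelow {u : ℝ} (h0 : 0 < u) : BddBelow {x | u ≤ cdf ν x} := by
  obtain ⟨y, hy⟩ := ((tendsto_cdf_atBot ν).eventually_lt_const h0).exists
  refine ⟨y, fun x hx => ?_⟩
  by_contra hxy
  push_neg at hxy
  exact absurd (hx.trans (monotone_cdf ν hxy.le)) (not_le.2 hy)

lemma le_cdf_quantile {u : ℝ} (h0 : 0 < u) (h1 : u < 1) : u ≤ cdf ν (quantile ν u) := by
  rw [quantile_eq_cdf]
  set S := {x | u ≤ cdf ν x} with hS
  have hne : S.Nonempty := qset_nonempty ν h1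
  have hbdd : BddBelow S := qset_bddBelow ν h0
  have h2 : ∀ ε > (0:ℝ), u ≤ cdf ν (sInf S + ε) := by
    intro ε hε
    obtain ⟨y, hyS, hy⟩ := (csInf_lt_iff hbdd hne).1 (lt_add_of_pos_right _ hε)
    exact hyS.trans (monotone_cdf ν hy.le)
  have htend : Tendsto (cdf ν) (𝓝[>] (sInf S)) (𝓝 (cdf ν (sInf S))) :=
    ((cdf ν).right_continuous (sInf S)).tendsto.mono_left (nhdsWithin_mono _ Ioi_subset_Ici_self)
  refine ge_of_tendsto htend ?_
  filter_upwards [self_mem_nhdsWithin] with x hx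
  have := h2 (x - sInf S) (sub_pos.2 hx)
  simpa using this

lemma quantile_le_iff {u x : ℝ} (h0 : 0 < u) (h1 : u < 1) :
    quantile ν u ≤ x ↔ u ≤ cdf ν x := by
  constructor
  · intro h
    exact (le_cdf_quantile ν h0 h1).trans (monotone_cdf ν h)
  · intro h
    rw [quantile_eq_cdf]
    exact csInf_le (qset_bddBelow ν h0) h

lemma quantile_monotoneOn : MonotoneOn (quantile ν) (Ioo 0 1) := by
  intro u hu v hv huv
  rw [quantile_eq_cdf, quantile_eq_cdf]
  exact csInf_le_csInf (qset_bddBelow ν hu.1) (qset_nonempty ν hv.2)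
    (fun x hx => le_trans huv hx)

lemma quantile_nonneg (hν : ν (Iio 0) = 0) {u : ℝ} (h0 : 0 < u) (h1 : u < 1) :
    0 ≤ quantile ν u := by
  rw [quantile_eq_cdf]
  refine le_csInf (qset_nonempty ν h1) fun x hx => ?_
  by_contra hx0
  push_neg at hx0
  have hcdf0 : cdf ν x = 0 := by
    have h1 : ν (Iic x) = 0 := measure_mono_null (Iic_subset_Iio.2 hx0) hν
    rw [cdf_eq_real, measureReal_def, h1, ENNReal.toReal_zero]
  rw [mem_setOf_eq, hcdf0] at hx
  linarith

/-- Measurable modification of the quantile function (junk value outside `(0,1)`). -/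
noncomputable def qex (ν : Measure ℝ) : ℝ → ℝ :=
  fun u => if u ∈ Ioo (0:ℝ) 1 then quantile ν u else 0

lemma measurable_qex : Measurable (qex ν) := by
  apply measurable_of_Iic
  intro x
  have hpre : qex ν ⁻¹' Iic x
      = (Ioo 0 1 ∩ Iic (cdf ν x)) ∪ (if 0 ≤ x then (Ioo (0:ℝ) 1)ᶜ else ∅) := by
    ext u
    simp only [mem_preimage, mem_Iic, qex]
    by_cases hu : u ∈ Ioo (0:ℝ) 1
    · rw [if_pos hu, quantile_le_iff ν hu.1 hu.2]
      simp only [mem_union, mem_inter_iff, hu, true_and, mem_Iic]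
      constructor
      · exact fun h => Or.inl h
      · rintro (h | h)
        · exact h
        · split_ifs at h with hx
          · exact absurd hu (by simpa using h)
          · exact absurd h (notMem_empty u)
    · rw [if_neg hu]
      simp only [mem_union, mem_inter_iff, hu, false_and, false_or]
      constructor
      · intro h
        rw [if_pos h]
        exact hu
      · intro h
        split_ifs at h with hx
        · exact hx
        · exact absurd h (notMem_empty u)
  rw [hpre]
  refine (measurableSet_Ioo.inter measurableSet_Iic).union ?_
  split_ifs
  · exact measurableSet_Ioo.compl
  · exact MeasurableSet.empty

lemma qex_ae_eq : qex ν =ᵐ[volume.restrict (Ioo (0:ℝ) 1)] quantile ν :=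
  (ae_restrict_mem measurableSet_Ioo).mono fun u hu => if_pos hu

lemma map_qex : (volume.restrict (Ioo (0:ℝ) 1)).map (qex ν) = ν := by
  have hfin : IsFiniteMeasure ((volume.restrict (Ioo (0:ℝ) 1)).map (qex ν)) := by
    constructor
    rw [Measure.map_apply (measurable_qex ν) MeasurableSet.univ]
    simp [Real.volume_Ioo]
  refine Measure.ext_of_Iic _ _ fun x => ?_
  rw [Measure.map_apply (measurable_qex ν) measurableSet_Iic,
      Measure.restrict_apply (measurable_qex ν measurableSet_Iic)]
  have hset : qex ν ⁻¹' Iic x ∩ Ioo 0 1 = Ioo 0 1 ∩ Iic (cdf ν x) := by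
    ext u
    simp only [mem_inter_iff, mem_preimage, mem_Iic, qex]
    constructor
    · rintro ⟨h1, h2⟩
      rw [if_pos h2, quantile_le_iff ν h2.1 h2.2] at h1
      exact ⟨h2, h1⟩
    · rintro ⟨h1, h2⟩
      rw [if_pos h1, quantile_le_iff ν h1.1 h1.2]
      exact ⟨h2, h1⟩
  rw [hset]
  have hc0 : 0 ≤ cdf ν x := cdf_nonneg ν x
  have hc1 : cdf ν x ≤ 1 := cdf_le_one ν x
  have hvol : volume (Ioo 0 1 ∩ Iic (cdf ν x)) = ENNReal.ofReal (cdf ν x) := by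
    rcases eq_or_lt_of_le hc1 with hc | hc
    · have : Ioo 0 1 ∩ Iic (cdf ν x) = Ioo (0:ℝ) 1 := by
        refine inter_eq_left.2 fun u hu => ?_
        rw [mem_Iic, hc]
        exact hu.2.le
      rw [this, Real.volume_Ioo, hc]
      norm_num
    · have : Ioo 0 1 ∩ Iic (cdf ν x) = Ioc (0:ℝ) (cdf ν x) := by
        ext u
        simp only [mem_inter_iff, mem_Ioo, mem_Iic, mem_Ioc]
        constructor
        · rintro ⟨⟨h1, _⟩, h3⟩; exact ⟨h1, h3⟩
        · rintro ⟨h1, h2⟩; exact ⟨⟨h1, lt_of_le_of_lt h2 hc⟩, h2⟩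
      rw [this, Real.volume_Ioc, sub_zero]
  rw [hvol, ofReal_cdf ν]

end Quantile

section Key

/-- The Fréchet upper bound functional, depending only on marginals. -/
noncomputable def frBound {d : ℕ} (ν : Fin d → Measure ℝ) : ℝ≥0∞ :=
  ∫⁻ t : Fin d → ℝ, {t : Fin d → ℝ | ∀ i, 0 ≤ t i}.indicator
      (fun t => ⨅ i, ν i (Ioi (t i))) t ∂(Measure.pi fun _ => volume)

variable {Ω : Type*} [MeasurableSpace Ω] (μ : Measure Ω) [IsProbabilityMeasure μ]

lemma layer_eq {d : ℕ} (Z : Fin d → Ω → ℝ) (hZ : ∀ i, Measurable (Z i)) :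
    ∫⁻ ω, ∏ i, ENNReal.ofReal (Z i ω) ∂μ
      = ∫⁻ t : Fin d → ℝ, μ (⋂ i, {ω | t i ∈ Ico 0 (Z i ω)}) ∂(Measure.pi fun _ => volume) := by
  have hE : ∀ (t : Fin d → ℝ) i, MeasurableSet {ω | t i ∈ Ico 0 (Z i ω)} := by
    intro t i
    have : {ω | t i ∈ Ico 0 (Z i ω)} = {ω : Ω | 0 ≤ t i} ∩ Z i ⁻¹' (Ioi (t i)) := by
      ext ω
      simp only [mem_setOf_eq, mem_Ico, mem_inter_iff, mem_preimage, mem_Ioi]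
    rw [this]
    exact (MeasurableSet.const _).inter ((hZ i) measurableSet_Ioi)
  have h1 : ∀ ω, ∏ i, ENNReal.ofReal (Z i ω)
      = ∫⁻ t : Fin d → ℝ, ∏ i, (Ico 0 (Z i ω)).indicator 1 (t i)
          ∂(Measure.pi fun _ => volume) := by
    intro ω
    rw [aux_lintegral_pi_prod d _ (fun i => measurable_one.indicator measurableSet_Ico)]
    refine Finset.prod_congr rfl fun i _ => ?_
    rw [lintegral_indicator_one measurableSet_Ico, Real.volume_Ico, sub_zero]
  simp_rw [h1]
  rw [lintegral_lintegral_swap]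
  · refine lintegral_congr fun t => ?_
    have h2 : ∀ ω, ∏ i, (Ico 0 (Z i ω)).indicator (1 : ℝ → ℝ≥0∞) (t i)
        = (⋂ i, {ω' | t i ∈ Ico 0 (Z i ω')}).indicator 1 ω := by
      intro ω
      rw [← aux_prod_indicator]
      refine Finset.prod_congr rfl fun i _ => ?_
      simp only [indicator_apply, mem_setOf_eq, Pi.one_apply]
    simp_rw [h2]
    exact lintegral_indicator_one (MeasurableSet.iInter fun i => hE t i)
  · apply Measurable.aemeasurable
    apply Finset.measurable_prod
    intro i _
    have heq : (fun p : Ω × (Fin d → ℝ) => (Ico 0 (Z i p.1)).indicator (1 : ℝ → ℝ≥0∞) (p.2 i))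
        = ({p : Ω × (Fin d → ℝ) | 0 ≤ p.2 i} ∩ {p | p.2 i < Z i p.1}).indicator 1 := by
      ext p
      simp only [indicator_apply, mem_inter_iff, mem_setOf_eq, mem_Ico, Pi.one_apply]
    have hsnd : Measurable fun p : Ω × (Fin d → ℝ) => p.2 i :=
      (measurable_pi_apply i).comp measurable_snd
    rw [show (fun p : Ω × (Fin d → ℝ) => (Ico 0 (Z i p.1)).indicator (1 : ℝ → ℝ≥0∞) (p.2 i))
        = ({p : Ω × (Fin d → ℝ) | 0 ≤ p.2 i} ∩ {p | p.2 i < Z i p.1}).indicator 1 from heq]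
    refine measurable_one.indicator ?_
    exact (measurableSet_le measurable_const hsnd).inter
      (measurableSet_lt hsnd ((hZ i).comp measurable_fst))

lemma inter_le {d : ℕ} (hd : 0 < d) (Z : Fin d → Ω → ℝ) (hZ : ∀ i, Measurable (Z i))
    (t : Fin d → ℝ) :
    μ (⋂ i, {ω | t i ∈ Ico 0 (Z i ω)})
      ≤ {t : Fin d → ℝ | ∀ i, 0 ≤ t i}.indicator
          (fun t => ⨅ i, (μ.map (Z i)) (Ioi (t i))) t := by
  haveI : Nonempty (Fin d) := Fin.pos_iff_nonempty.mp hd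
  by_cases ht : ∀ i, 0 ≤ t i
  · rw [indicator_of_mem (show t ∈ {t : Fin d → ℝ | ∀ i, 0 ≤ t i} from ht)]
    refine le_iInf fun j => ?_
    rw [Measure.map_apply (hZ j) measurableSet_Ioi]
    refine measure_mono ((iInter_subset _ j).trans ?_)
    intro ω hω
    exact hω.2
  · rw [indicator_of_notMem (show t ∉ {t : Fin d → ℝ | ∀ i, 0 ≤ t i} from ht)]
    push_neg at ht
    obtain ⟨i, hi⟩ := ht
    have hsub : (⋂ i, {ω | t i ∈ Ico 0 (Z i ω)}) ⊆ (∅ : Set Ω) := by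
      refine (iInter_subset _ i).trans fun ω hω => ?_
      exact absurd hω.1 (not_le.2 hi)
    exact le_of_le_of_eq (measure_mono hsub) measure_empty

lemma inter_eq {d : ℕ} (hd : 0 < d) (Z : Fin d → Ω → ℝ) (hZ : ∀ i, Measurable (Z i))
    (hcom : Comonotonic μ Z) (t : Fin d → ℝ) :
    μ (⋂ i, {ω | t i ∈ Ico 0 (Z i ω)})
      = {t : Fin d → ℝ | ∀ i, 0 ≤ t i}.indicator
          (fun t => ⨅ i, (μ.map (Z i)) (Ioi (t i))) t := by
  haveI : Nonempty (Fin d) := Fin.pos_iff_nonempty.mp hd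
  by_cases ht : ∀ i, 0 ≤ t i
  swap
  · refine le_antisymm (inter_le μ hd Z hZ t) ?_
    rw [indicator_of_notMem (show t ∉ {t : Fin d → ℝ | ∀ i, 0 ≤ t i} from ht)]
    exact zero_le
  rw [indicator_of_mem (show t ∈ {t : Fin d → ℝ | ∀ i, 0 ≤ t i} from ht)]
  obtain ⟨T, f, hf, hae⟩ := hcom
  have hG : ∀ᵐ ω ∂μ, ∀ i, Z i ω = f i (T ω) := ae_all_iff.2 hae
  have hEset : ∀ i, {ω | t i ∈ Ico 0 (Z i ω)} = Z i ⁻¹' Ioi (t i) := by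
    intro i
    ext ω
    simp only [mem_setOf_eq, mem_Ico, mem_preimage, mem_Ioi, ht i, true_and]
  simp_rw [hEset]
  set U : Fin d → Set ℝ := fun i => {s | t i < f i s} with hU
  have hupper : ∀ i, IsUpperSet (U i) := by
    intro i s s' hss' hs
    exact lt_of_lt_of_le hs (hf i hss')
  obtain ⟨i₀, -, hmin⟩ := aux_exists_min Finset.univ Finset.univ_nonempty U
    (fun i _ j _ => (hupper i).total (hupper j))
  have hstep : ∀ j ω, Z i₀ ω = f i₀ (T ω) → Z j ω = f j (T ω) →
      t i₀ < Z i₀ ω → t j < Z j ω := by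
    intro j ω h1 h2 h3
    have hmem : T ω ∈ U i₀ := by
      rw [hU]
      show t i₀ < f i₀ (T ω)
      rw [← h1]
      exact h3
    have : T ω ∈ U j := hmin j (Finset.mem_univ j) hmem
    rw [h2]
    exact this
  have hsub : ∀ j, μ (Z i₀ ⁻¹' Ioi (t i₀)) ≤ μ (Z j ⁻¹' Ioi (t j)) := by
    intro j
    refine measure_mono_ae (hG.mono fun ω hω hmem => ?_)
    exact hstep j ω (hω i₀) (hω j) hmem
  have hIE : μ (⋂ i, Z i ⁻¹' Ioi (t i)) = μ (Z i₀ ⁻¹' Ioi (t i₀)) := by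
    refine le_antisymm (measure_mono (iInter_subset _ _)) ?_
    refine measure_mono_ae (hG.mono fun ω hω hmem => ?_)
    show ω ∈ ⋂ i, Z i ⁻¹' Ioi (t i)
    rw [mem_iInter]
    intro j
    exact hstep j ω (hω i₀) (hω j) hmem
  rw [hIE]
  refine le_antisymm (le_iInf fun j => ?_) ?_
  · rw [Measure.map_apply (hZ j) measurableSet_Ioi]
    exact hsub j
  · refine iInf_le_of_le i₀ ?_
    rw [Measure.map_apply (hZ i₀) measurableSet_Ioi]

lemma key_eq {d : ℕ} (hd : 0 < d) (Z : Fin d → Ω → ℝ) (hZ : ∀ i, Measurable (Z i))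
    (hcom : Comonotonic μ Z) :
    ∫⁻ ω, ∏ i, ENNReal.ofReal (Z i ω) ∂μ = frBound (fun i => μ.map (Z i)) := by
  rw [layer_eq μ Z hZ]
  exact lintegral_congr (inter_eq μ hd Z hZ hcom)

lemma key_le {d : ℕ} (hd : 0 < d) (Z : Fin d → Ω → ℝ) (hZ : ∀ i, Measurable (Z i)) :
    ∫⁻ ω, ∏ i, ENNReal.ofReal (Z i ω) ∂μ ≤ frBound (fun i => μ.map (Z i)) := by
  rw [layer_eq μ Z hZ]
  exact lintegral_mono' le_rfl (inter_le μ hd Z hZ)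

end Key

/-- If the `|X_i|` are comonotonic and `∏ X_i ≥ 0` a.s., then `(X₁,…,X_d)` attains the
maximum expected product among all couplings with the same marginals, and
`E(∏ X_i) = E(∏ G_i⁻¹(U))` where `G_i` is the distribution function of `|X_i|`. -/
theorem stmt_4 {Ω : Type*} [MeasurableSpace Ω] (μ : Measure Ω) [IsProbabilityMeasure μ]
    (d : ℕ) (X : Fin d → Ω → ℝ) (hm : ∀ i, Measurable (X i))
    (hcom : Comonotonic μ (fun i ω => |X i ω|))
    (hpos : ∀ᵐ ω ∂μ, 0 ≤ ∏ i, X i ω)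
    (hInt : Integrable (fun ω => ∏ i, X i ω) μ) :
    (∫ ω, ∏ i, X i ω ∂μ
        = ∫ u in Icc (0:ℝ) 1, ∏ i, quantile (μ.map (fun ω => |X i ω|)) u) ∧
    (∀ (Ω' : Type*) [MeasurableSpace Ω'] (μ' : Measure Ω') [IsProbabilityMeasure μ']
        (Y : Fin d → Ω' → ℝ), (∀ i, Measurable (Y i)) →
        (∀ i, μ'.map (Y i) = μ.map (X i)) →
        Integrable (fun ω => ∏ i, Y i ω) μ' →
        ∫ ω, ∏ i, Y i ω ∂μ' ≤ ∫ ω, ∏ i, X i ω ∂μ) := by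
  classical
  rcases Nat.eq_zero_or_pos d with hd0 | hd
  · subst hd0
    constructor
    · simp only [Finset.univ_eq_empty, Finset.prod_empty]
      rw [integral_const, setIntegral_const]
      simp [Real.volume_Icc]
    · intro Ω' _ μ' _ Y _ _ _
      simp only [Finset.univ_eq_empty, Finset.prod_empty, integral_const]
      simp
  set ν : Fin d → Measure ℝ := fun i => μ.map (fun ω => |X i ω|) with hν
  haveI hνprob : ∀ i, IsProbabilityMeasure (ν i) := fun i =>
    Measure.isProbabilityMeasure_map (hm i).abs.aemeasurable
  have hν0 : ∀ i, ν i (Iio 0) = 0 := by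
    intro i
    simp only [hν]
    rw [Measure.map_apply (hm i).abs measurableSet_Iio]
    have hemp : (fun ω => |X i ω|) ⁻¹' (Iio 0) = ∅ := by
      ext ω
      simp only [mem_preimage, mem_Iio, mem_empty_iff_false, iff_false, not_lt]
      exact abs_nonneg _
    rw [hemp, measure_empty]
  have hmprod : Measurable fun ω => ∏ i, X i ω := Finset.measurable_prod _ fun i _ => hm i
  have hXeq1 : (fun ω => ENNReal.ofReal (∏ i, X i ω))
      =ᵐ[μ] (fun ω => ∏ i, ENNReal.ofReal (|X i ω|)) := by
    filter_upwards [hpos] with ω hω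
    calc ENNReal.ofReal (∏ i, X i ω) = ENNReal.ofReal (∏ i, |X i ω|) := by
          rw [← Finset.abs_prod, abs_of_nonneg hω]
      _ = ∏ i, ENNReal.ofReal (|X i ω|) :=
          ENNReal.ofReal_prod_of_nonneg fun i _ => abs_nonneg _
  have hXkey : ∫⁻ ω, ENNReal.ofReal (∏ i, X i ω) ∂μ = frBound ν := by
    rw [lintegral_congr_ae hXeq1,
      key_eq μ hd (fun i ω => |X i ω|) (fun i => (hm i).abs) hcom]
  have hXfin : ∫⁻ ω, ENNReal.ofReal (∏ i, X i ω) ∂μ ≠ ⊤ := hInt.lintegral_lt_top.ne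
  have hfrfin : frBound ν ≠ ⊤ := hXkey ▸ hXfin
  have hXint : ∫ ω, ∏ i, X i ω ∂μ = (frBound ν).toReal := by
    rw [integral_eq_lintegral_of_nonneg_ae hpos hmprod.aestronglyMeasurable, hXkey]
  set m : Measure ℝ := volume.restrict (Ioo (0:ℝ) 1) with hmdef
  haveI : IsProbabilityMeasure m := by
    constructor
    rw [hmdef]
    simp [Real.volume_Ioo]
  have harctan : ∀ x : ℝ, 1/2 + Real.arctan x / Real.pi ∈ Ioo (0:ℝ) 1 := by
    intro x
    have h1 : Real.arctan x / Real.pi < 1/2 := by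
      rw [div_lt_iff₀ Real.pi_pos]
      nlinarith [Real.arctan_lt_pi_div_two x, Real.pi_pos]
    have h2 : -(1/2 : ℝ) < Real.arctan x / Real.pi := by
      rw [lt_div_iff₀ Real.pi_pos]
      nlinarith [Real.neg_pi_div_two_lt_arctan x, Real.pi_pos]
    constructor
    · linarith
    · linarith
  have hTσ : ∀ u ∈ Ioo (0:ℝ) 1,
      1/2 + Real.arctan (Real.tan (Real.pi * (u - 1/2))) / Real.pi = u := by
    intro u hu
    rw [Real.arctan_tan (by nlinarith [Real.pi_pos, hu.1, hu.2])
      (by nlinarith [Real.pi_pos, hu.1, hu.2])]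
    rw [mul_div_cancel_left₀ _ Real.pi_ne_zero]
    ring
  have hqcom : Comonotonic m (fun i u => qex (ν i) u) := by
    refine ⟨fun u => Real.tan (Real.pi * (u - 1/2)),
      fun i x => quantile (ν i) (1/2 + Real.arctan x / Real.pi), fun i => ?_, fun i => ?_⟩
    · intro a b hab
      exact quantile_monotoneOn (ν i) (harctan a) (harctan b)
        (add_le_add_right
          ((div_le_div_iff_of_pos_right Real.pi_pos).2 (Real.arctan_strictMono.monotone hab)) _)
    · refine (ae_restrict_mem measurableSet_Ioo).mono fun u hu => ?_
      simp only [qex, if_pos hu, hTσ u hu]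
  have hqkey : ∫⁻ u, ∏ i, ENNReal.ofReal (qex (ν i) u) ∂m = frBound ν := by
    rw [key_eq m hd (fun i u => qex (ν i) u) (fun i => measurable_qex (ν i)) hqcom]
    have hmaps : (fun i => m.map (qex (ν i))) = ν := funext fun i => map_qex (ν i)
    rw [hmaps]
  have hq_ae : ∀ᵐ u ∂m, u ∈ Ioo (0:ℝ) 1 := ae_restrict_mem measurableSet_Ioo
  have hq_nonneg : 0 ≤ᵐ[m] fun u => ∏ i, quantile (ν i) u :=
    hq_ae.mono fun u hu => Finset.prod_nonneg fun i _ => quantile_nonneg (ν i) (hν0 i) hu.1 hu.2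
  have hq_prod_ae : (fun u => ∏ i, qex (ν i) u) =ᵐ[m] fun u => ∏ i, quantile (ν i) u :=
    hq_ae.mono fun u hu => Finset.prod_congr rfl fun i _ => if_pos hu
  have hq_sm : AEStronglyMeasurable (fun u => ∏ i, quantile (ν i) u) m :=
    ((Finset.measurable_prod _ fun i _ => measurable_qex (ν i)).aestronglyMeasurable).congr
      hq_prod_ae
  have hq_ofReal : (fun u => ENNReal.ofReal (∏ i, quantile (ν i) u))
      =ᵐ[m] fun u => ∏ i, ENNReal.ofReal (qex (ν i) u) := by
    filter_upwards [hq_ae] with u hu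
    calc ENNReal.ofReal (∏ i, quantile (ν i) u)
        = ∏ i, ENNReal.ofReal (quantile (ν i) u) :=
          ENNReal.ofReal_prod_of_nonneg fun i _ => quantile_nonneg (ν i) (hν0 i) hu.1 hu.2
      _ = ∏ i, ENNReal.ofReal (qex (ν i) u) := by
          refine Finset.prod_congr rfl fun i _ => ?_
          simp only [qex, if_pos hu]
  have hqint : ∫ u in Icc (0:ℝ) 1, ∏ i, quantile (ν i) u = (frBound ν).toReal := by
    rw [integral_Icc_eq_integral_Ioo]
    rw [show (∫ u in Ioo (0:ℝ) 1, ∏ i, quantile (ν i) u) = ∫ u, ∏ i, quantile (ν i) u ∂m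
      from rfl]
    rw [integral_eq_lintegral_of_nonneg_ae hq_nonneg hq_sm]
    rw [lintegral_congr_ae hq_ofReal, hqkey]
  constructor
  · rw [hXint, hqint]
  · intro Ω' _ μ' _ Y hmY hlaw hIntY
    have habs : ∫ ω, ∏ i, Y i ω ∂μ' ≤ ∫ ω, |∏ i, Y i ω| ∂μ' :=
      integral_mono hIntY hIntY.abs fun ω => le_abs_self _
    have hYlt : ∫ ω, |∏ i, Y i ω| ∂μ'
        = (∫⁻ ω, ENNReal.ofReal (|∏ i, Y i ω|) ∂μ').toReal :=
      integral_eq_lintegral_of_nonneg_ae (ae_of_all _ fun ω => abs_nonneg _)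
        hIntY.abs.aestronglyMeasurable
    have hYof : ∀ ω, ENNReal.ofReal (|∏ i, Y i ω|) = ∏ i, ENNReal.ofReal (|Y i ω|) := by
      intro ω
      rw [Finset.abs_prod]
      exact ENNReal.ofReal_prod_of_nonneg fun i _ => abs_nonneg _
    have hmapY : (fun i => μ'.map (fun ω => |Y i ω|)) = ν := by
      funext i
      have h1 : μ'.map (fun ω => |Y i ω|) = (μ'.map (Y i)).map (fun x : ℝ => |x|) := by
        rw [Measure.map_map measurable_abs (hmY i)]
        rfl
      have h2 : μ.map (fun ω => |X i ω|) = (μ.map (X i)).map (fun x : ℝ => |x|) := by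
        rw [Measure.map_map measurable_abs (hm i)]
        rfl
      simp only [hν]
      rw [h1, hlaw i, ← h2]
    have hYle : ∫⁻ ω, ENNReal.ofReal (|∏ i, Y i ω|) ∂μ' ≤ frBound ν := by
      calc ∫⁻ ω, ENNReal.ofReal (|∏ i, Y i ω|) ∂μ'
          = ∫⁻ ω, ∏ i, ENNReal.ofReal (|Y i ω|) ∂μ' := lintegral_congr fun ω => hYof ω
        _ ≤ frBound (fun i => μ'.map (fun ω => |Y i ω|)) :=
            key_le μ' hd (fun i ω => |Y i ω|) (fun i => (hmY i).abs)
        _ = frBound ν := by rw [hmapY]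
    calc ∫ ω, ∏ i, Y i ω ∂μ' ≤ ∫ ω, |∏ i, Y i ω| ∂μ' := habs
      _ = (∫⁻ ω, ENNReal.ofReal (|∏ i, Y i ω|) ∂μ').toReal := hYlt
      _ ≤ (frBound ν).toReal := ENNReal.toReal_mono hfrfin hYle
      _ = ∫ ω, ∏ i, X i ω ∂μ := hXint.symm
end
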